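/- Let N ≥ 0 and define (η_i) from the Thue–Morse sequence by η_{3k+1} = N+2−2τ_k, η_{3k+2} = N+τ_k, η_{3k+3} = N+1+τ_{k+1}, and (η̂_i) by the same formulas with τ replaced by 1−τ (i.e. η̂_{3k+1} = N+2−2(1−τ_k), η̂_{3k+2} = N+(1−τ_k), η̂_{3k+3} = N+1+(1−τ_{k+1})). Then for every n ≥ 0 and every 0 ≤ i < 3·2ⁿ: η̂₁⋯η̂_{3·2ⁿ−i} ≺ η_{i+1}⋯η_{3·2ⁿ} ≼ η₁⋯η_{3·2ⁿ−i}. -/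
import Mathlib
set_option linter.unusedSectionVars false
set_option maxHeartbeats 1000000


section TauLemmas
variable (τ : ℕ → ℕ) (hτ0 : τ 0 = 0) (hτe : ∀ i, τ (2 * i) = τ i)
  (hτo : ∀ i, τ (2 * i + 1) = 1 - τ i)

include hτ0 hτe hτo

lemma tau_le : ∀ k, τ k ≤ 1 := by
  intro k
  induction k using Nat.strong_induction_on with
  | _ k ih =>
    rcases Nat.even_or_odd k with ⟨j, hj⟩ | ⟨j, hj⟩
    · rcases Nat.eq_zero_or_pos j with rfl | hjp
      · simp [hj, hτ0]
      · have : τ k = τ j := by rw [hj, ← two_mul, hτe]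
        rw [this]; exact ih j (by omega)
    · have : τ k = 1 - τ j := by rw [hj, hτo]
      rw [this]; exact Nat.sub_le _ _

lemma tau_pow : ∀ n, τ (2 ^ n) = 1 := by
  intro n
  induction n with
  | zero => have := hτo 0; simpa [hτ0] using this
  | succ n ih =>
    have : (2:ℕ) ^ (n+1) = 2 * 2 ^ n := by ring
    rw [this, hτe]; exact ih

lemma tau_shift : ∀ n m, m < 2 ^ n → τ (2 ^ n + m) = 1 - τ m := by
  intro n
  induction n with
  | zero =>
    intro m hm
    interval_cases m
    have := hτo 0; simpa [hτ0] using this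
  | succ n ih =>
    intro m hm
    rcases Nat.even_or_odd m with ⟨q, hq⟩ | ⟨q, hq⟩
    · have h1 : (2:ℕ) ^ (n+1) + m = 2 * (2 ^ n + q) := by rw [hq]; ring
      rw [h1, hτe, ih q (by omega), hq, ← two_mul, hτe]
    · have h1 : (2:ℕ) ^ (n+1) + m = 2 * (2 ^ n + q) + 1 := by rw [hq]; ring
      have h2 : τ m = 1 - τ q := by rw [hq, hτo]
      have h3 := tau_le τ hτ0 hτe hτo q
      rw [h1, hτo, ih q (by omega), h2]

end TauLemmas

section EtaLemmas
variable (N : ℕ) (τ : ℕ → ℕ) (hτ0 : τ 0 = 0) (hτe : ∀ i, τ (2 * i) = τ i)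
  (hτo : ∀ i, τ (2 * i + 1) = 1 - τ i)
  (η ηh : ℕ → ℕ)
  (h1 : ∀ k, η (3 * k + 1) = N + 2 - 2 * τ k)
  (h2 : ∀ k, η (3 * k + 2) = N + τ k)
  (h3 : ∀ k, η (3 * k + 3) = N + 1 + τ (k + 1))
  (g1 : ∀ k, ηh (3 * k + 1) = N + 2 - 2 * (1 - τ k))
  (g2 : ∀ k, ηh (3 * k + 2) = N + (1 - τ k))
  (g3 : ∀ k, ηh (3 * k + 3) = N + 1 + (1 - τ (k + 1)))

include hτ0 hτe hτo h3 in
lemma eta_haM : ∀ n : ℕ, η (3 * 2 ^ n) = N + 2 := by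
  intro n
  have hp : (1:ℕ) ≤ 2 ^ n := Nat.one_le_two_pow
  have e : 3 * 2 ^ n = 3 * (2 ^ n - 1) + 3 := by omega
  have e2 : 2 ^ n - 1 + 1 = 2 ^ n := by omega
  rw [e, h3, e2, tau_pow τ hτ0 hτe hτo]

include hτ0 hτe hτo g3 in
lemma eta_hbM : ∀ n : ℕ, ηh (3 * 2 ^ n) = N + 1 := by
  intro n
  have hp : (1:ℕ) ≤ 2 ^ n := Nat.one_le_two_pow
  have e : 3 * 2 ^ n = 3 * (2 ^ n - 1) + 3 := by omega
  have e2 : 2 ^ n - 1 + 1 = 2 ^ n := by omega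
  rw [e, g3, e2, tau_pow τ hτ0 hτe hτo]

include hτ0 hτe hτo h1 h2 h3 g1 g2 g3 in
lemma eta_hDa : ∀ n r : ℕ, r < 3 * 2 ^ n - 1 → η (3 * 2 ^ n + r + 1) = ηh (r + 1) := by
  intro n r hr
  obtain ⟨k, c, hc, rfl⟩ : ∃ k c, c < 3 ∧ r = 3 * k + c :=
    ⟨r / 3, r % 3, Nat.mod_lt _ (by norm_num), by omega⟩
  have hp : (1:ℕ) ≤ 2 ^ n := Nat.one_le_two_pow
  interval_cases c
  · have hk : k < 2 ^ n := by omega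
    have e : 3 * 2 ^ n + (3 * k + 0) + 1 = 3 * (2 ^ n + k) + 1 := by ring
    rw [e, h1, tau_shift τ hτ0 hτe hτo n k hk]
    rw [show 3 * k + 0 + 1 = 3 * k + 1 by ring, g1]
  · have hk : k < 2 ^ n := by omega
    have e : 3 * 2 ^ n + (3 * k + 1) + 1 = 3 * (2 ^ n + k) + 2 := by ring
    rw [e, h2, tau_shift τ hτ0 hτe hτo n k hk]
    rw [show 3 * k + 1 + 1 = 3 * k + 2 by ring, g2]
  · have hk : k + 1 < 2 ^ n := by omega
    have e : 3 * 2 ^ n + (3 * k + 2) + 1 = 3 * (2 ^ n + k) + 3 := by ring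
    have e2 : 2 ^ n + k + 1 = 2 ^ n + (k + 1) := by ring
    rw [e, h3, e2, tau_shift τ hτ0 hτe hτo n (k+1) hk]
    rw [show 3 * k + 2 + 1 = 3 * k + 3 by ring, g3]

include hτ0 hτe hτo h1 h2 h3 g1 g2 g3 in
lemma eta_hDb : ∀ n r : ℕ, r < 3 * 2 ^ n - 1 → ηh (3 * 2 ^ n + r + 1) = η (r + 1) := by
  intro n r hr
  obtain ⟨k, c, hc, rfl⟩ : ∃ k c, c < 3 ∧ r = 3 * k + c :=
    ⟨r / 3, r % 3, Nat.mod_lt _ (by norm_num), by omega⟩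
  have hp : (1:ℕ) ≤ 2 ^ n := Nat.one_le_two_pow
  interval_cases c
  · have hk : k < 2 ^ n := by omega
    have e : 3 * 2 ^ n + (3 * k + 0) + 1 = 3 * (2 ^ n + k) + 1 := by ring
    have ht := tau_le τ hτ0 hτe hτo k
    rw [e, g1, tau_shift τ hτ0 hτe hτo n k hk]
    rw [show 3 * k + 0 + 1 = 3 * k + 1 by ring, h1]
    omega
  · have hk : k < 2 ^ n := by omega
    have e : 3 * 2 ^ n + (3 * k + 1) + 1 = 3 * (2 ^ n + k) + 2 := by ring
    have ht := tau_le τ hτ0 hτe hτo k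
    rw [e, g2, tau_shift τ hτ0 hτe hτo n k hk]
    rw [show 3 * k + 1 + 1 = 3 * k + 2 by ring, h2]
    omega
  · have hk : k + 1 < 2 ^ n := by omega
    have e : 3 * 2 ^ n + (3 * k + 2) + 1 = 3 * (2 ^ n + k) + 3 := by ring
    have e2 : 2 ^ n + k + 1 = 2 ^ n + (k + 1) := by ring
    have ht := tau_le τ hτ0 hτe hτo (k+1)
    rw [e, g3, e2, tau_shift τ hτ0 hτe hτo n (k+1) hk]
    rw [show 3 * k + 2 + 1 = 3 * k + 3 by ring, h3]
    omega

end EtaLemmas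


/-- suffixes of `a` are lex-≤ prefixes of `a` (first-difference form) -/
def C1 (a : ℕ → ℕ) (M : ℕ) : Prop :=
  ∀ i t, i + t < M → (∀ s < t, a (i + s) = a s) → a (i + t) ≤ a t

/-- prefixes of `b` are lex-< suffixes of `a` -/
def C2 (a b : ℕ → ℕ) (M : ℕ) : Prop :=
  ∀ i < M, ∃ t, i + t < M ∧ (∀ s < t, b s = a (i + s)) ∧ b t < a (i + t)

/-- suffixes of `b` are lex-≥ prefixes of `b` -/
def C3 (b : ℕ → ℕ) (M : ℕ) : Prop :=
  ∀ i t, i + t < M → (∀ s < t, b (i + s) = b s) → b t ≤ b (i + t)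

/-- suffixes of `b` are lex-< prefixes of `a` -/
def C4 (a b : ℕ → ℕ) (M : ℕ) : Prop :=
  ∀ i < M, ∃ t, i + t < M ∧ (∀ s < t, b (i + s) = a s) ∧ b (i + t) < a t

/-- strengthened version of C3 with endpoint information -/
def C5 (b : ℕ → ℕ) (M : ℕ) : Prop :=
  ∀ i < M, ∃ t, i + t < M ∧ (∀ s < t, b s = b (i + s)) ∧
    (b t < b (i + t) ∨ (i + t = M - 1 ∧ b t ≤ b (i + t)))

section Steps
variable {N : ℕ} {a b : ℕ → ℕ} {M : ℕ}
variable (hM3 : 3 ≤ M)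
  (haMn : a (M - 1) = N + 2) (hbMn : b (M - 1) = N + 1)
  (haM2 : a (2 * M - 1) = N + 2) (hbM2 : b (2 * M - 1) = N + 1)
  (hDa : ∀ r < M - 1, a (M + r) = b r)
  (hDb : ∀ r < M - 1, b (M + r) = a r)

include hM3 haMn hbMn haM2 hDa in
lemma step1 (p1 : C1 a M) (p2 : C2 a b M) (p4 : C4 a b M) : C1 a (2 * M) := by
  intro i t hit hag
  rcases Nat.eq_zero_or_pos i with rfl | hi
  · rw [Nat.zero_add]
  by_cases hC : M ≤ i
  · -- i ≥ M : compare suffix of b with prefix of a, via p4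
    have ht : t < M := by omega
    obtain ⟨t4, ht4, hag4, hst4⟩ := p4 (i - M) (by omega)
    rcases lt_trichotomy t t4 with hlt | heq | hgt
    · have e1 : a (i + t) = b (i - M + t) := by
        have e := hDa (i - M + t) (by omega); rwa [show M + (i - M + t) = i + t by omega] at e
      rw [e1, hag4 t hlt]
    · subst heq
      by_cases hb : i - M + t = M - 1
      · have e1 : a (i + t) = N + 2 := by
          rw [show i + t = 2 * M - 1 by omega]; exact haM2
        have e2 : b (i - M + t) = N + 1 := by rw [hb]; exact hbMn
        omega
      · have e1 : a (i + t) = b (i - M + t) := by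
          have e := hDa (i - M + t) (by omega); rwa [show M + (i - M + t) = i + t by omega] at e
        omega
    · exfalso
      have e0 := hag t4 hgt
      have e1 : a (i + t4) = b (i - M + t4) := by
        have e := hDa (i - M + t4) (by omega); rwa [show M + (i - M + t4) = i + t4 by omega] at e
      omega
  · by_cases hB : i + t < M
    · exact p1 i t hB hag
    · by_cases hBt : t < M
      · -- crossing case
        obtain ⟨t2, ht2, hag2, hst2⟩ := p2 (M - i) (by omega)
        have hder : ∀ r, r < i + t - M → b r = a (M - i + r) := by
          intro r hr
          have e0 := hag (M - i + r) (by omega)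
          have e1 : a (i + (M - i + r)) = b r := by
            rw [show i + (M - i + r) = M + r by omega]; exact hDa _ (by omega)
          omega
        rcases lt_trichotomy t2 (i + t - M) with hlt | heq | hgt
        · exfalso; have := hder t2 hlt; omega
        · have e1 : a (i + t) = b (i + t - M) := by
            have e := hDa (i + t - M) (by omega); rwa [show M + (i + t - M) = i + t by omega] at e
          rw [heq] at hst2
          rw [show M - i + (i + t - M) = t by omega] at hst2
          omega
        · have e3 := hag2 (i + t - M) hgt
          rw [show M - i + (i + t - M) = t by omega] at e3
          have e1 : a (i + t) = b (i + t - M) := by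
            have e := hDa (i + t - M) (by omega); rwa [show M + (i + t - M) = i + t by omega] at e
          omega
      · -- t ≥ M : impossible
        exfalso
        obtain ⟨t2, ht2, hag2, hst2⟩ := p2 (M - i) (by omega)
        have hlt : t2 < i + t - M := by omega
        have e0 := hag (M - i + t2) (by omega)
        have e1 : a (i + (M - i + t2)) = b t2 := by
          rw [show i + (M - i + t2) = M + t2 by omega]; exact hDa _ (by omega)
        omega

include hM3 haMn hbM2 hDb in
lemma step3 (p3 : C3 b M) (p2 : C2 a b M) (p4 : C4 a b M) : C3 b (2 * M) := by
  intro i t hit hag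
  rcases Nat.eq_zero_or_pos i with rfl | hi
  · rw [Nat.zero_add]
  by_cases hC : M ≤ i
  · have ht : t < M := by omega
    obtain ⟨t2, ht2, hag2, hst2⟩ := p2 (i - M) (by omega)
    rcases lt_trichotomy t t2 with hlt | heq | hgt
    · have e1 : b (i + t) = a (i - M + t) := by
        have e := hDb (i - M + t) (by omega); rwa [show M + (i - M + t) = i + t by omega] at e
      have := hag2 t hlt
      omega
    · subst heq
      by_cases hb : i - M + t = M - 1
      · have e1 : b (i + t) = N + 1 := by
          rw [show i + t = 2 * M - 1 by omega]; exact hbM2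
        have e2 : a (i - M + t) = N + 2 := by rw [hb]; exact haMn
        omega
      · have e1 : b (i + t) = a (i - M + t) := by
          have e := hDb (i - M + t) (by omega); rwa [show M + (i - M + t) = i + t by omega] at e
        omega
    · exfalso
      have e0 := hag t2 hgt
      have e1 : b (i + t2) = a (i - M + t2) := by
        have e := hDb (i - M + t2) (by omega); rwa [show M + (i - M + t2) = i + t2 by omega] at e
      omega
  · by_cases hB : i + t < M
    · exact p3 i t hB hag
    · by_cases hBt : t < M
      · obtain ⟨t4, ht4, hag4, hst4⟩ := p4 (M - i) (by omega)
        have hder : ∀ r, r < i + t - M → a r = b (M - i + r) := by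
          intro r hr
          have e0 := hag (M - i + r) (by omega)
          have e1 : b (i + (M - i + r)) = a r := by
            rw [show i + (M - i + r) = M + r by omega]; exact hDb _ (by omega)
          omega
        rcases lt_trichotomy t4 (i + t - M) with hlt | heq | hgt
        · exfalso; have := hder t4 hlt; omega
        · have e1 : b (i + t) = a (i + t - M) := by
            have e := hDb (i + t - M) (by omega); rwa [show M + (i + t - M) = i + t by omega] at e
          rw [heq] at hst4
          rw [show M - i + (i + t - M) = t by omega] at hst4
          omega
        · have e3 := hag4 (i + t - M) hgt
          rw [show M - i + (i + t - M) = t by omega] at e3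
          have e1 : b (i + t) = a (i + t - M) := by
            have e := hDb (i + t - M) (by omega); rwa [show M + (i + t - M) = i + t by omega] at e
          omega
      · exfalso
        obtain ⟨t4, ht4, hag4, hst4⟩ := p4 (M - i) (by omega)
        have hlt : t4 < i + t - M := by omega
        have e0 := hag (M - i + t4) (by omega)
        have e1 : b (i + (M - i + t4)) = a t4 := by
          rw [show i + (M - i + t4) = M + t4 by omega]; exact hDb _ (by omega)
        omega

include hM3 haMn hbMn haM2 hDa in
lemma step2 (p2 : C2 a b M) (p5 : C5 b M) : C2 a b (2 * M) := by
  intro i hi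
  by_cases h : i < M
  · obtain ⟨t, ht, hag, hst⟩ := p2 i h
    exact ⟨t, by omega, hag, hst⟩
  · obtain ⟨t5, ht5, hag5, hd⟩ := p5 (i - M) (by omega)
    refine ⟨t5, by omega, ?_, ?_⟩
    · intro s hs
      have e1 : a (i + s) = b (i - M + s) := by
        have e := hDa (i - M + s) (by omega); rwa [show M + (i - M + s) = i + s by omega] at e
      have := hag5 s hs
      omega
    · by_cases hb : i - M + t5 = M - 1
      · have e1 : a (i + t5) = N + 2 := by
          rw [show i + t5 = 2 * M - 1 by omega]; exact haM2
        have e2 : b (i - M + t5) = N + 1 := by rw [hb]; exact hbMn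
        rcases hd with hst | ⟨_, hle⟩ <;> omega
      · have e1 : a (i + t5) = b (i - M + t5) := by
          have e := hDa (i - M + t5) (by omega); rwa [show M + (i - M + t5) = i + t5 by omega] at e
        rcases hd with hst | ⟨hbd, _⟩ <;> omega

include hM3 haMn hbM2 hDb in
lemma step4 (p4 : C4 a b M) (p1 : C1 a M) : C4 a b (2 * M) := by
  intro i hi
  by_cases h : i < M
  · obtain ⟨t, ht, hag, hst⟩ := p4 i h
    exact ⟨t, by omega, hag, hst⟩
  · by_cases hfull : ∀ s, s < M - 1 - (i - M) → a (i - M + s) = a s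
    · refine ⟨M - 1 - (i - M), by omega, ?_, ?_⟩
      · intro s hs
        have e1 : b (i + s) = a (i - M + s) := by
          have e := hDb (i - M + s) (by omega); rwa [show M + (i - M + s) = i + s by omega] at e
        have := hfull s hs
        omega
      · have e1 : b (i + (M - 1 - (i - M))) = N + 1 := by
          rw [show i + (M - 1 - (i - M)) = 2 * M - 1 by omega]; exact hbM2
        have e2 : a (i - M + (M - 1 - (i - M))) ≤ a (M - 1 - (i - M)) :=
          p1 (i - M) (M - 1 - (i - M)) (by omega) hfull
        rw [show i - M + (M - 1 - (i - M)) = M - 1 by omega, haMn] at e2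
        omega
    · push_neg at hfull
      obtain ⟨s0, hs0K, hs0ne⟩ := hfull
      have hex : ∃ s, a (i - M + s) ≠ a s := ⟨s0, hs0ne⟩
      have ht0 : Nat.find hex ≤ s0 := Nat.find_min' hex hs0ne
      have hagg : ∀ s < Nat.find hex, a (i - M + s) = a s := by
        intro s hs
        have := Nat.find_min hex hs
        exact not_not.mp this
      have hne : a (i - M + Nat.find hex) ≠ a (Nat.find hex) := Nat.find_spec hex
      have hle : a (i - M + Nat.find hex) ≤ a (Nat.find hex) :=
        p1 (i - M) (Nat.find hex) (by omega) hagg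
      refine ⟨Nat.find hex, by omega, ?_, ?_⟩
      · intro s hs
        have e1 : b (i + s) = a (i - M + s) := by
          have e := hDb (i - M + s) (by omega); rwa [show M + (i - M + s) = i + s by omega] at e
        have := hagg s hs
        omega
      · have e1 : b (i + Nat.find hex) = a (i - M + Nat.find hex) := by
          rw [show i + Nat.find hex = M + (i - M + Nat.find hex) by omega]
          exact hDb _ (by omega)
        omega

include hM3 haMn hbMn hbM2 hDb in
lemma step5 (ha0 : a 0 = N + 2) (hb0 : b 0 = N)
    (p5 : C5 b M) (p4 : C4 a b M) (p2 : C2 a b M) : C5 b (2 * M) := by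
  intro i hi
  rcases Nat.eq_zero_or_pos i with rfl | hipos
  · refine ⟨2 * M - 1, by omega, fun s _ => by rw [Nat.zero_add], Or.inr ⟨by omega, ?_⟩⟩
    rw [Nat.zero_add]
  by_cases h : i < M
  · obtain ⟨t5, ht5, hag5, hd⟩ := p5 i h
    rcases hd with hst | ⟨hbd, hle⟩
    · exact ⟨t5, by omega, hag5, Or.inl hst⟩
    · by_cases hstrict : b t5 < b (i + t5)
      · exact ⟨t5, by omega, hag5, Or.inl hstrict⟩
      · have heq5 : b t5 = b (i + t5) := by omega
        obtain ⟨t4, ht4, hag4, hst4⟩ := p4 (t5 + 1) (by omega)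
        refine ⟨t5 + 1 + t4, by omega, ?_, Or.inl ?_⟩
        · intro s hs
          rcases lt_trichotomy s t5 with h' | h' | h'
          · exact hag5 s h'
          · rw [h']; exact heq5
          · have e0 : b (t5 + 1 + (s - (t5 + 1))) = a (s - (t5 + 1)) :=
              hag4 _ (by omega)
            rw [show t5 + 1 + (s - (t5 + 1)) = s by omega] at e0
            have e1 : b (i + s) = a (s - (t5 + 1)) := by
              have e := hDb (s - (t5 + 1)) (by omega); rwa [show M + (s - (t5 + 1)) = i + s by omega] at e
            omega
        · have e1 : b (i + (t5 + 1 + t4)) = a t4 := by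
            rw [show i + (t5 + 1 + t4) = M + t4 by omega]; exact hDb _ (by omega)
          omega
  · by_cases hM : i = M
    · refine ⟨0, by omega, fun s hs => absurd hs (Nat.not_lt_zero s), Or.inl ?_⟩
      have e1 : b (i + 0) = a 0 := by
        have e := hDb 0 (by omega); rwa [show M + 0 = i + 0 by omega] at e
      omega
    · obtain ⟨t2, ht2, hag2, hst2⟩ := p2 (i - M) (by omega)
      have hagr : ∀ s < t2, b s = b (i + s) := by
        intro s hs
        have e1 : b (i + s) = a (i - M + s) := by
          have e := hDb (i - M + s) (by omega); rwa [show M + (i - M + s) = i + s by omega] at e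
        have := hag2 s hs
        omega
      by_cases hb : i - M + t2 = M - 1
      · refine ⟨t2, by omega, hagr, Or.inr ⟨by omega, ?_⟩⟩
        have e1 : b (i + t2) = N + 1 := by
          rw [show i + t2 = 2 * M - 1 by omega]; exact hbM2
        have e2 : a (i - M + t2) = N + 2 := by rw [hb]; exact haMn
        omega
      · refine ⟨t2, by omega, hagr, Or.inl ?_⟩
        have e1 : b (i + t2) = a (i - M + t2) := by
          have e := hDb (i - M + t2) (by omega); rwa [show M + (i - M + t2) = i + t2 by omega] at e
        omega

end Steps

section Base
variable {N : ℕ} {a b : ℕ → ℕ}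
variable (ha0 : a 0 = N + 2) (ha1 : a 1 = N) (ha2 : a 2 = N + 2)
  (hb0 : b 0 = N) (hb1 : b 1 = N + 1) (hb2 : b 2 = N + 1)

include ha0 ha1 ha2 in
lemma base1 : C1 a 3 := by
  intro i t hit hag
  have hi3 : i < 3 := by omega
  interval_cases i
  · rw [Nat.zero_add]
  · have ht2 : t < 2 := by omega
    interval_cases t
    · show a 1 ≤ a 0; omega
    · have hx : a 1 = a 0 := hag 0 (by omega)
      omega
  · have ht1 : t < 1 := by omega
    interval_cases t
    · show a 2 ≤ a 0; omega

include ha0 ha1 ha2 hb0 hb1 in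
lemma base2 : C2 a b 3 := by
  intro i hi
  interval_cases i
  · refine ⟨0, by omega, fun s hs => absurd hs (by omega), ?_⟩
    show b 0 < a 0; omega
  · refine ⟨1, by omega, ?_, ?_⟩
    · intro s hs
      interval_cases s
      show b 0 = a 1; omega
    · show b 1 < a 2; omega
  · refine ⟨0, by omega, fun s hs => absurd hs (by omega), ?_⟩
    show b 0 < a 2; omega

include hb0 hb1 hb2 in
lemma base3 : C3 b 3 := by
  intro i t hit hag
  have hi3 : i < 3 := by omega
  interval_cases i
  · rw [Nat.zero_add]
  · have ht2 : t < 2 := by omega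
    interval_cases t
    · show b 0 ≤ b 1; omega
    · have hx : b 1 = b 0 := hag 0 (by omega)
      omega
  · have ht1 : t < 1 := by omega
    interval_cases t
    · show b 0 ≤ b 2; omega

include ha0 hb0 hb1 hb2 in
lemma base4 : C4 a b 3 := by
  intro i hi
  interval_cases i
  · refine ⟨0, by omega, fun s hs => absurd hs (by omega), ?_⟩
    show b 0 < a 0; omega
  · refine ⟨0, by omega, fun s hs => absurd hs (by omega), ?_⟩
    show b 1 < a 0; omega
  · refine ⟨0, by omega, fun s hs => absurd hs (by omega), ?_⟩
    show b 2 < a 0; omega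

include hb0 hb1 hb2 in
lemma base5 : C5 b 3 := by
  intro i hi
  interval_cases i
  · refine ⟨2, by omega, fun s _ => by rw [Nat.zero_add], Or.inr ⟨by omega, by simp⟩⟩
  · refine ⟨0, by omega, fun s hs => absurd hs (by omega), Or.inl ?_⟩
    show b 0 < b 1; omega
  · refine ⟨0, by omega, fun s hs => absurd hs (by omega), Or.inl ?_⟩
    show b 0 < b 2; omega

end Base


section Core
variable {N : ℕ} {a b : ℕ → ℕ}

lemma eta_core
    (ha0 : a 0 = N + 2) (ha1 : a 1 = N) (ha2 : a 2 = N + 2)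
    (hb0 : b 0 = N) (hb1 : b 1 = N + 1) (hb2 : b 2 = N + 1)
    (haM : ∀ n : ℕ, a (3 * 2 ^ n - 1) = N + 2)
    (hbM : ∀ n : ℕ, b (3 * 2 ^ n - 1) = N + 1)
    (hDa : ∀ n r : ℕ, r < 3 * 2 ^ n - 1 → a (3 * 2 ^ n + r) = b r)
    (hDb : ∀ n r : ℕ, r < 3 * 2 ^ n - 1 → b (3 * 2 ^ n + r) = a r) :
    ∀ n : ℕ, C1 a (3 * 2 ^ n) ∧ C2 a b (3 * 2 ^ n) ∧ C3 b (3 * 2 ^ n) ∧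
      C4 a b (3 * 2 ^ n) ∧ C5 b (3 * 2 ^ n) := by
  intro n
  induction n with
  | zero =>
    refine ⟨?_, ?_, ?_, ?_, ?_⟩ <;> norm_num
    · exact base1 ha0 ha1 ha2
    · exact base2 ha0 ha1 ha2 hb0 hb1
    · exact base3 hb0 hb1 hb2
    · exact base4 ha0 hb0 hb1 hb2
    · exact base5 hb0 hb1 hb2
  | succ n ih =>
    obtain ⟨p1, p2, p3, p4, p5⟩ := ih
    have hp : (1:ℕ) ≤ 2 ^ n := Nat.one_le_two_pow
    have hM3 : 3 ≤ 3 * 2 ^ n := by omega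
    have h2M : 3 * 2 ^ (n + 1) = 2 * (3 * 2 ^ n) := by ring
    have haMn := haM n
    have hbMn := hbM n
    have haM2 : a (2 * (3 * 2 ^ n) - 1) = N + 2 := by
      have := haM (n + 1); rwa [h2M] at this
    have hbM2 : b (2 * (3 * 2 ^ n) - 1) = N + 1 := by
      have := hbM (n + 1); rwa [h2M] at this
    rw [h2M]
    exact ⟨step1 hM3 haMn hbMn haM2 (hDa n) p1 p2 p4,
      step2 hM3 haMn hbMn haM2 (hDa n) p2 p5,
      step3 hM3 haMn hbM2 (hDb n) p3 p2 p4,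
      step4 hM3 haMn hbM2 (hDb n) p4 p1,
      step5 hM3 haMn hbMn hbM2 (hDb n) ha0 hb0 p5 p4 p2⟩

end Core

lemma lex_ofFn_of_firstdiff : ∀ {L : ℕ} (f g : Fin L → ℕ) (k : ℕ) (hk : k < L),
    (∀ j (hj : j < k), f ⟨j, hj.trans hk⟩ = g ⟨j, hj.trans hk⟩) →
    f ⟨k, hk⟩ < g ⟨k, hk⟩ →
    List.Lex (· < ·) (List.ofFn f) (List.ofFn g) := by
  intro L
  induction L with
  | zero => intro f g k hk; omega
  | succ L ih =>
    intro f g k hk hag hlt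
    rw [List.ofFn_succ, List.ofFn_succ]
    cases k with
    | zero => exact List.Lex.rel hlt
    | succ k =>
      have h0 : f 0 = g 0 := hag 0 (Nat.succ_pos k)
      rw [h0]
      exact List.Lex.cons (ih (fun i => f i.succ) (fun i => g i.succ) k
        (Nat.lt_of_succ_lt_succ hk) (fun j hj => hag (j + 1) (Nat.succ_lt_succ hj)) hlt)


/-- η̂₁⋯η̂_{3·2ⁿ−i} ≺ η_{i+1}⋯η_{3·2ⁿ} ≼ η₁⋯η_{3·2ⁿ−i}. -/
theorem eta_lex_inequalities (N : ℕ) (τ : ℕ → ℕ)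
    (hτ0 : τ 0 = 0) (hτe : ∀ i, τ (2 * i) = τ i) (hτo : ∀ i, τ (2 * i + 1) = 1 - τ i)
    (η ηh : ℕ → ℕ)
    (h1 : ∀ k, η (3 * k + 1) = N + 2 - 2 * τ k)
    (h2 : ∀ k, η (3 * k + 2) = N + τ k)
    (h3 : ∀ k, η (3 * k + 3) = N + 1 + τ (k + 1))
    (g1 : ∀ k, ηh (3 * k + 1) = N + 2 - 2 * (1 - τ k))
    (g2 : ∀ k, ηh (3 * k + 2) = N + (1 - τ k))
    (g3 : ∀ k, ηh (3 * k + 3) = N + 1 + (1 - τ (k + 1)))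
    (n i : ℕ) (hi : i < 3 * 2 ^ n) :
    List.Lex (· < ·)
        (List.ofFn (fun t : Fin (3 * 2 ^ n - i) => ηh ((t : ℕ) + 1)))
        (List.ofFn (fun t : Fin (3 * 2 ^ n - i) => η (i + (t : ℕ) + 1))) ∧
      (List.Lex (· < ·)
          (List.ofFn (fun t : Fin (3 * 2 ^ n - i) => η (i + (t : ℕ) + 1)))
          (List.ofFn (fun t : Fin (3 * 2 ^ n - i) => η ((t : ℕ) + 1))) ∨
        (List.ofFn (fun t : Fin (3 * 2 ^ n - i) => η (i + (t : ℕ) + 1))) =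
          (List.ofFn (fun t : Fin (3 * 2 ^ n - i) => η ((t : ℕ) + 1)))) := by
  have hτ1 : τ 1 = 1 := by have := hτo 0; simpa [hτ0] using this
  -- interface values
  have ha0 : η (0 + 1) = N + 2 := by have := h1 0; norm_num [hτ0] at this ⊢; exact this
  have ha1 : η (1 + 1) = N := by have := h2 0; norm_num [hτ0] at this ⊢; exact this
  have ha2 : η (2 + 1) = N + 2 := by have := h3 0; norm_num [hτ1] at this ⊢; exact this
  have hb0 : ηh (0 + 1) = N := by have := g1 0; norm_num [hτ0] at this ⊢; exact this
  have hb1 : ηh (1 + 1) = N + 1 := by have := g2 0; norm_num [hτ0] at this ⊢; exact this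
  have hb2 : ηh (2 + 1) = N + 1 := by have := g3 0; norm_num [hτ1] at this ⊢; exact this
  have hcore := eta_core (N := N) (a := fun t => η (t + 1)) (b := fun t => ηh (t + 1))
    ha0 ha1 ha2 hb0 hb1 hb2
    (fun m => by
      have hp : (1:ℕ) ≤ 2 ^ m := Nat.one_le_two_pow
      show η (3 * 2 ^ m - 1 + 1) = N + 2
      rw [show 3 * 2 ^ m - 1 + 1 = 3 * 2 ^ m by omega]
      exact eta_haM N τ hτ0 hτe hτo η h3 m)
    (fun m => by
      have hp : (1:ℕ) ≤ 2 ^ m := Nat.one_le_two_pow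
      show ηh (3 * 2 ^ m - 1 + 1) = N + 1
      rw [show 3 * 2 ^ m - 1 + 1 = 3 * 2 ^ m by omega]
      exact eta_hbM N τ hτ0 hτe hτo ηh g3 m)
    (fun m r hr => eta_hDa N τ hτ0 hτe hτo η ηh h1 h2 h3 g1 g2 g3 m r hr)
    (fun m r hr => eta_hDb N τ hτ0 hτe hτo η ηh h1 h2 h3 g1 g2 g3 m r hr)
    n
  obtain ⟨hc1, hc2, -, -, -⟩ := hcore
  simp only [C1] at hc1
  simp only [C2] at hc2
  constructor
  · obtain ⟨t, ht, hag, hst⟩ := hc2 i hi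
    exact lex_ofFn_of_firstdiff _ _ t (by omega) (fun j hj => hag j hj) hst
  · by_cases hall : ∀ j, j < 3 * 2 ^ n - i → η (i + j + 1) = η (j + 1)
    · right
      have he : (fun t : Fin (3 * 2 ^ n - i) => η (i + (t : ℕ) + 1)) =
          (fun t : Fin (3 * 2 ^ n - i) => η ((t : ℕ) + 1)) :=
        funext fun j => hall j j.isLt
      rw [he]
    · left
      push_neg at hall
      obtain ⟨j0, hj0L, hj0⟩ := hall
      have hex : ∃ j, η (i + j + 1) ≠ η (j + 1) := ⟨j0, hj0⟩
      have hkL : Nat.find hex ≤ j0 := Nat.find_min' hex hj0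
      have hag : ∀ s < Nat.find hex, η (i + s + 1) = η (s + 1) := by
        intro s hs
        exact not_not.mp (Nat.find_min hex hs)
      have hne := Nat.find_spec hex
      have hle : η (i + Nat.find hex + 1) ≤ η (Nat.find hex + 1) :=
        hc1 i (Nat.find hex) (by omega) hag
      have hstrict : η (i + Nat.find hex + 1) < η (Nat.find hex + 1) := by omega
      exact lex_ofFn_of_firstdiff _ _ (Nat.find hex) (by omega)
        (fun j hj => hag j hj) hstrict
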